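/- arXiv:2102.03288 — 5 statements merged into one kernel-verified Lean document; each statement's English description precedes it below -/
import Mathlib

section
/- Let X be a Banach space with the reconstruction property, and let (f_n)_{n∈ℕ} in X* and (τ_n)_{n∈ℕ} in X form an approximate Bessel sequence for X. Then there exist sequences (h_n)_{n∈ℕ} in X* and (ρ_n)_{n∈ℕ} in X such that the combined pair ((f_n)∪(h_n), (τ_n)∪(ρ_n)) (indexed over the disjoint union ℕ ⊕ ℕ) is an approximate Schauder frame for X. -/
open Filter Topology

/-- If a Banach space `X` has the reconstruction property, then every
approximate Bessel sequence `(f, τ)` for `X` can be expanded (by sequences `h` in `X*`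
and `ρ` in `X`, giving a pair indexed over `ℕ ⊕ ℕ`) to an approximate Schauder frame. -/
theorem approxBessel_expands_to_ASF_of_reconstruction
    {𝕜 : Type*} [RCLike 𝕜] {X : Type*} [NormedAddCommGroup X]
    [NormedSpace 𝕜 X] [CompleteSpace X]
    -- `X` has the reconstruction property
    (hrec : ∃ (F : ℕ → X →L[𝕜] 𝕜) (v : ℕ → X), ∀ x : X,
      Tendsto (fun N => ∑ i ∈ Finset.range N, F i x • v i) atTop (𝓝 x))
    -- `(f, τ)` is an approximate Bessel sequence with frame operator `S`
    (f : ℕ → X →L[𝕜] 𝕜) (τ : ℕ → X) (S : X →L[𝕜] X)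
    (hBessel : ∀ x : X,
      Tendsto (fun N => ∑ i ∈ Finset.range N, f i x • τ i) atTop (𝓝 (S x))) :
    -- there is an expansion `((f) ∪ (h), (τ) ∪ (ρ))` which is an approximate Schauder
    -- frame for `X`, i.e. whose frame operator is a bounded invertible operator `T`
    ∃ (h : ℕ → X →L[𝕜] 𝕜) (ρ : ℕ → X) (T : X ≃L[𝕜] X), ∀ x : X, ∃ y z : X,
      Tendsto (fun N => ∑ i ∈ Finset.range N, f i x • τ i) atTop (𝓝 y) ∧
      Tendsto (fun N => ∑ i ∈ Finset.range N, h i x • ρ i) atTop (𝓝 z) ∧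
      y + z = T x := by
  obtain ⟨F, v, hFv⟩ := hrec
  refine ⟨fun i => (F i).comp (ContinuousLinearMap.id 𝕜 X - S), v,
    ContinuousLinearEquiv.refl 𝕜 X, fun x => ⟨S x, x - S x, hBessel x, ?_, by simp⟩⟩
  simpa using hFv (x - S x)
end

section
/- Let X be a Banach space, let (f_n)_{n∈ℕ} in X* and (τ_n)_{n∈ℕ} in X form an approximate Bessel sequence for X with frame operator S_{f,τ}, and let (g_n)_{n∈ℕ} in X* and (ω_n)_{n∈ℕ} in X satisfy x = ∑_{n=1}^∞ g_n(x)ω_n for every x ∈ X. Define h_n := g_n and ρ_n := (I_X − S_{f,τ})ω_n for all n ∈ ℕ. Then for every x ∈ X one has ∑_{n=1}^∞ f_n(x)τ_n + ∑_{n=1}^∞ h_n(x)ρ_n = x; in particular, the combined pair ((f_n)∪(h_n), (τ_n)∪(ρ_n)) is an approximate Schauder frame for X whose frame operator is the identity I_X. -/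
open Filter Topology

/-- Let `(f, τ)` be an approximate Bessel sequence for `X` with frame
operator `S`, and let `(g, ω)` satisfy `x = ∑ₙ gₙ(x) ωₙ` for all `x`. With `hₙ := gₙ`
and `ρₙ := (I - S) ωₙ`, one has `∑ₙ fₙ(x) τₙ + ∑ₙ hₙ(x) ρₙ = x` for all `x`; in
particular the combined pair is an ASF for `X` whose frame operator is the identity. -/
theorem expansion_with_identity_frame_operator
    {𝕜 : Type*} [RCLike 𝕜] {X : Type*} [NormedAddCommGroup X]
    [NormedSpace 𝕜 X] [CompleteSpace X]
    (f : ℕ → X →L[𝕜] 𝕜) (τ : ℕ → X) (S : X →L[𝕜] X)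
    (hBessel : ∀ x : X,
      Tendsto (fun N => ∑ i ∈ Finset.range N, f i x • τ i) atTop (𝓝 (S x)))
    (g : ℕ → X →L[𝕜] 𝕜) (ω : ℕ → X)
    (hrec : ∀ x : X,
      Tendsto (fun N => ∑ i ∈ Finset.range N, g i x • ω i) atTop (𝓝 x))
    -- `hₙ := gₙ` and `ρₙ := (I_X - S) ωₙ`
    (h : ℕ → X →L[𝕜] 𝕜) (ρ : ℕ → X)
    (hdef : ∀ n, h n = g n)
    (ρdef : ∀ n, ρ n = (ContinuousLinearMap.id 𝕜 X - S) (ω n)) :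
    ∀ x : X, ∃ y z : X,
      Tendsto (fun N => ∑ i ∈ Finset.range N, f i x • τ i) atTop (𝓝 y) ∧
      Tendsto (fun N => ∑ i ∈ Finset.range N, h i x • ρ i) atTop (𝓝 z) ∧
      y + z = x := by
  intro x
  refine ⟨S x, x - S x, hBessel x, ?_, by abel⟩
  have key : ∀ N, ∑ i ∈ Finset.range N, h i x • ρ i
      = (∑ i ∈ Finset.range N, g i x • ω i) - S (∑ i ∈ Finset.range N, g i x • ω i) := by
    intro N
    rw [map_sum]
    rw [← Finset.sum_sub_distrib]
    refine Finset.sum_congr rfl fun i _ => ?_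
    rw [hdef, ρdef]
    simp [smul_sub]
  simp only [key]
  exact ((hrec x).sub ((S.continuous.tendsto x).comp (hrec x)))
end

section
/- Let X be a Banach space, let λ ∈ 𝕜 \ {0}, let (f_n)_{n∈ℕ} in X* and (τ_n)_{n∈ℕ} in X form an approximate Bessel sequence for X with frame operator S_{f,τ}, and let (g_n)_{n∈ℕ} in X* and (ω_n)_{n∈ℕ} in X satisfy x = ∑_{n=1}^∞ g_n(x)ω_n for every x ∈ X. Define h_n := g_n and ρ_n := (λI_X − S_{f,τ})ω_n for all n ∈ ℕ. Then for every x ∈ X one has ∑_{n=1}^∞ f_n(x)τ_n + ∑_{n=1}^∞ h_n(x)ρ_n = λx; in particular, the combined pair ((f_n)∪(h_n), (τ_n)∪(ρ_n)) is a λ-tight approximate Schauder frame for X. -/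
open Filter Topology

/-- Let `λ ≠ 0`, let `(f, τ)` be an approximate Bessel sequence for `X`
with frame operator `S`, and let `(g, ω)` satisfy `x = ∑ₙ gₙ(x) ωₙ` for all `x`. With
`hₙ := gₙ` and `ρₙ := (λI - S) ωₙ`, one has `∑ₙ fₙ(x) τₙ + ∑ₙ hₙ(x) ρₙ = λx` for all
`x`; in particular the combined pair is a `λ`-tight approximate Schauder frame. -/
theorem expansion_to_tight_ASF
    {𝕜 : Type*} [RCLike 𝕜] {X : Type*} [NormedAddCommGroup X]
    [NormedSpace 𝕜 X] [CompleteSpace X]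
    (lam : 𝕜) (hlam : lam ≠ 0)
    (f : ℕ → X →L[𝕜] 𝕜) (τ : ℕ → X) (S : X →L[𝕜] X)
    (hBessel : ∀ x : X,
      Tendsto (fun N => ∑ i ∈ Finset.range N, f i x • τ i) atTop (𝓝 (S x)))
    (g : ℕ → X →L[𝕜] 𝕜) (ω : ℕ → X)
    (hrec : ∀ x : X,
      Tendsto (fun N => ∑ i ∈ Finset.range N, g i x • ω i) atTop (𝓝 x))
    -- `hₙ := gₙ` and `ρₙ := (λ I_X - S) ωₙ`
    (h : ℕ → X →L[𝕜] 𝕜) (ρ : ℕ → X)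
    (hdef : ∀ n, h n = g n)
    (ρdef : ∀ n, ρ n = (lam • ContinuousLinearMap.id 𝕜 X - S) (ω n)) :
    ∀ x : X, ∃ y z : X,
      Tendsto (fun N => ∑ i ∈ Finset.range N, f i x • τ i) atTop (𝓝 y) ∧
      Tendsto (fun N => ∑ i ∈ Finset.range N, h i x • ρ i) atTop (𝓝 z) ∧
      y + z = lam • x := by
  intro x
  set T : X →L[𝕜] X := lam • ContinuousLinearMap.id 𝕜 X - S
  refine ⟨S x, T x, hBessel x, ?_, ?_⟩
  · have : Tendsto (fun N => T (∑ i ∈ Finset.range N, g i x • ω i)) atTop (𝓝 (T x)) :=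
      (T.continuous.tendsto x).comp (hrec x)
    convert this using 2 with N
    simp [hdef, ρdef, map_sum, T]
  · simp [T]
end

section
/- Let X be a Banach space which admits a Schauder basis, and let (f_n)_{n∈ℕ} in X* and (τ_n)_{n∈ℕ} in X form an approximate Bessel sequence for X. Then there exist sequences (h_n)_{n∈ℕ} in X* and (ρ_n)_{n∈ℕ} in X such that the combined pair ((f_n)∪(h_n), (τ_n)∪(ρ_n)) (indexed over ℕ ⊕ ℕ) is an approximate Schauder frame for X. -/
open Filter Topology BoundedContinuousFunction

section Aux

variable {𝕜 : Type*} [RCLike 𝕜] {X : Type*} [NormedAddCommGroup X]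
    [NormedSpace 𝕜 X] [CompleteSpace X]

/-- Coordinate functionals of a Schauder basis are continuous: the identity admits a
pointwise rank-one expansion with continuous coefficient functionals. -/
theorem schauder_coord_continuous
    (e : ℕ → X)
    (hbasis : ∀ x : X, ∃! c : ℕ → 𝕜,
      Tendsto (fun N => ∑ i ∈ Finset.range N, c i • e i) atTop (𝓝 x)) :
    ∃ h : ℕ → X →L[𝕜] 𝕜, ∀ x : X,
      Tendsto (fun N => ∑ i ∈ Finset.range N, h i x • e i) atTop (𝓝 x) := by
  classical
  -- basis vectors are nonzero
  have he : ∀ i, e i ≠ 0 := by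
    intro i hei
    have h1 : Tendsto (fun N => ∑ j ∈ Finset.range N,
        (fun j => if j = i then (1:𝕜) else 0) j • e j) atTop (𝓝 (0:X)) := by
      have hz : ∀ N, ∑ j ∈ Finset.range N,
          (fun j => if j = i then (1:𝕜) else 0) j • e j = 0 := by
        intro N
        apply Finset.sum_eq_zero
        intro j _
        by_cases hj : j = i
        · simp [hj, hei]
        · simp [hj]
      rw [funext hz]
      exact tendsto_const_nhds
    have h2 : Tendsto (fun N => ∑ j ∈ Finset.range N,
        (0 : ℕ → 𝕜) j • e j) atTop (𝓝 (0:X)) := by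
      have hz : ∀ N, ∑ j ∈ Finset.range N, (0 : ℕ → 𝕜) j • e j = 0 := by
        intro N; simp
      rw [funext hz]
      exact tendsto_const_nhds
    have heq := (hbasis 0).unique h1 h2
    have := congrFun heq i
    simp at this
  -- the Banach space of partial-sum sequences
  set G : Submodule 𝕜 (ℕ →ᵇ X) :=
    { carrier := {u | u 0 = 0 ∧ (∀ n, u (n+1) - u n ∈ (𝕜 ∙ e n)) ∧
        ∃ x, Tendsto (fun n => u n) atTop (𝓝 x)}
      add_mem' := by
        rintro u v ⟨hu0, hu1, xu, hu2⟩ ⟨hv0, hv1, xv, hv2⟩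
        refine ⟨by simp [hu0, hv0], fun n => ?_, xu + xv, ?_⟩
        · have hm := (𝕜 ∙ e n).add_mem (hu1 n) (hv1 n)
          convert hm using 1
          simp only [BoundedContinuousFunction.coe_add, Pi.add_apply]
          abel
        · have := hu2.add hv2
          simpa using this
      zero_mem' := by
        refine ⟨rfl, fun n => by simp, 0, by simpa using tendsto_const_nhds⟩
      smul_mem' := by
        rintro a u ⟨hu0, hu1, xu, hu2⟩
        refine ⟨by simp [hu0], fun n => ?_, a • xu, ?_⟩
        · have hm := (𝕜 ∙ e n).smul_mem a (hu1 n)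
          convert hm using 1
          simp [smul_sub]
        · have := hu2.const_smul a
          simpa using this } with hGdef
  have memP : ∀ u : G, ((u : ℕ →ᵇ X) 0 = 0 ∧
      (∀ n, (u : ℕ →ᵇ X) (n+1) - (u : ℕ →ᵇ X) n ∈ (𝕜 ∙ e n)) ∧
      ∃ x, Tendsto (fun n => (u : ℕ →ᵇ X) n) atTop (𝓝 x)) := fun u => u.2
  -- G is closed, hence complete
  have hGc : IsClosed (G : Set (ℕ →ᵇ X)) := by
    have h1 : IsClosed {u : ℕ →ᵇ X | u 0 = 0} :=
      isClosed_eq ((evalCLM (𝕜 := 𝕜) (0:ℕ)).continuous) continuous_const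
    have h2 : IsClosed {u : ℕ →ᵇ X | ∀ n, u (n+1) - u n ∈ (𝕜 ∙ e n)} := by
      have hset : {u : ℕ →ᵇ X | ∀ n, u (n+1) - u n ∈ (𝕜 ∙ e n)} =
          ⋂ n, (fun u : ℕ →ᵇ X => u (n+1) - u n) ⁻¹' ((𝕜 ∙ e n) : Set X) := by
        ext u; simp [Set.mem_iInter]
      rw [hset]
      refine isClosed_iInter fun n => IsClosed.preimage ?_ ?_
      · exact ((evalCLM (𝕜 := 𝕜) (n+1)).continuous).sub ((evalCLM (𝕜 := 𝕜) n).continuous)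
      · exact (𝕜 ∙ e n).closed_of_finiteDimensional
    have h3 : IsClosed {u : ℕ →ᵇ X | ∃ x, Tendsto (fun n => u n) atTop (𝓝 x)} := by
      refine IsSeqClosed.isClosed ?_
      intro uk u hm hu
      have hcau : CauchySeq (fun n => u n) := by
        rw [Metric.cauchySeq_iff]
        intro ε hε
        obtain ⟨k, hk⟩ : ∃ k, dist (uk k) u < ε/3 := by
          obtain ⟨k, hk⟩ := (Metric.tendsto_atTop.1 hu) (ε/3) (by linarith)
          exact ⟨k, hk k le_rfl⟩
        obtain ⟨x, hx⟩ := hm k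
        obtain ⟨N, hN⟩ := Metric.cauchySeq_iff.1 hx.cauchySeq (ε/3) (by linarith)
        refine ⟨N, fun m hmN n hnN => ?_⟩
        have d1 : dist (u m) ((uk k) m) ≤ dist u (uk k) := dist_coe_le_dist m
        have d2 : dist ((uk k) n) (u n) ≤ dist (uk k) u := dist_coe_le_dist n
        calc dist (u m) (u n)
            ≤ dist (u m) ((uk k) m) + dist ((uk k) m) ((uk k) n) + dist ((uk k) n) (u n) :=
              dist_triangle4 _ _ _ _
          _ < ε/3 + ε/3 + ε/3 := by
              have h2' := hN m hmN n hnN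
              have hd : dist u (uk k) < ε/3 := by rwa [dist_comm] at hk
              have e1 := lt_of_le_of_lt d1 hd
              have e2 := lt_of_le_of_lt d2 hk
              linarith
          _ = ε := by ring
      obtain ⟨x, hx⟩ := cauchySeq_tendsto_of_complete hcau
      exact ⟨x, hx⟩
    exact h1.inter (h2.inter h3)
  haveI : CompleteSpace G := hGc.completeSpace_coe
  -- the limit map
  have hex : ∀ u : G, ∃ x, Tendsto (fun n => (u : ℕ →ᵇ X) n) atTop (𝓝 x) :=
    fun u => (memP u).2.2
  have hlim : ∀ u : G,
      Tendsto (fun n => (u : ℕ →ᵇ X) n) atTop (𝓝 ((hex u).choose)) :=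
    fun u => (hex u).choose_spec
  let Llin : G →ₗ[𝕜] X :=
    { toFun := fun u => (hex u).choose
      map_add' := fun u v => tendsto_nhds_unique (hlim (u + v))
        (by simpa using (hlim u).add (hlim v))
      map_smul' := fun a u => tendsto_nhds_unique (hlim (a • u))
        (by simpa using (hlim u).const_smul a) }
  have hLbound : ∀ u : G, ‖Llin u‖ ≤ 1 * ‖u‖ := by
    intro u
    rw [one_mul]
    refine le_of_tendsto (hlim u).norm (Eventually.of_forall fun n => ?_)
    exact norm_coe_le_norm _ n
  let L : G →L[𝕜] X := LinearMap.mkContinuous Llin 1 hLbound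
  have hLval : ∀ u : G, Tendsto (fun n => (u : ℕ →ᵇ X) n) atTop (𝓝 (L u)) := hlim
  -- injectivity
  have hker : L.ker = ⊥ := by
    rw [LinearMap.ker_eq_bot']
    intro u hu
    obtain ⟨hu0, hu1, -⟩ := memP u
    choose a ha using fun n => Submodule.mem_span_singleton.1 (hu1 n)
    have hval : ∀ N, (u : ℕ →ᵇ X) N = ∑ i ∈ Finset.range N, a i • e i := by
      intro N
      induction N with
      | zero => simpa using hu0
      | succ n ih =>
        rw [Finset.sum_range_succ, ← ih, ha n]
        abel
    have h1 : Tendsto (fun N => ∑ i ∈ Finset.range N, a i • e i) atTop (𝓝 (0:X)) := by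
      have ht := hLval u
      rw [show L u = 0 from hu] at ht
      have hfe : (fun n => (u : ℕ →ᵇ X) n) = fun N => ∑ i ∈ Finset.range N, a i • e i :=
        funext hval
      rwa [hfe] at ht
    have h0 : Tendsto (fun N => ∑ i ∈ Finset.range N, (fun _ => (0:𝕜)) i • e i)
        atTop (𝓝 (0:X)) := by
      simpa using tendsto_const_nhds
    have ha0 : a = fun _ => (0:𝕜) := (hbasis 0).unique h1 h0
    have hzero : ∀ N, (u : ℕ →ᵇ X) N = 0 := by
      intro N; rw [hval N, ha0]; simp
    apply Subtype.ext
    ext n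
    simpa using hzero n
  -- surjectivity
  have hrange : L.range = ⊤ := by
    rw [LinearMap.range_eq_top]
    intro x
    obtain ⟨c, hc, -⟩ := hbasis x
    set s : ℕ → X := fun N => ∑ i ∈ Finset.range N, c i • e i with hs
    obtain ⟨C, hC⟩ := (Metric.isBounded_range_of_tendsto s hc).exists_norm_le
    have hC' : ∀ n, ‖s n‖ ≤ C := fun n => hC (s n) (Set.mem_range_self n)
    let u : ℕ →ᵇ X := ofNormedAddCommGroup s continuous_of_discreteTopology C hC'
    have hucoe : ∀ n, u n = s n := fun n => rfl
    have hmemu : u ∈ G := by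
      refine ⟨by simp [hucoe, hs], fun n => ?_, x, by simpa [hucoe] using hc⟩
      refine Submodule.mem_span_singleton.2 ⟨c n, ?_⟩
      simp only [hucoe, hs, Finset.sum_range_succ]
      abel
    exact ⟨⟨u, hmemu⟩, tendsto_nhds_unique (hLval ⟨u, hmemu⟩) (by simpa [hucoe] using hc)⟩
  let T : G ≃L[𝕜] X := ContinuousLinearEquiv.ofBijective L hker hrange
  have hT : ∀ u : G, T u = L u := fun u => rfl
  -- dual functionals normalizing e
  choose g hg1 hg2 using fun i => exists_dual_vector 𝕜 (e i) (norm_ne_zero_iff.2 (he i))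
  let ψ : ℕ → X →L[𝕜] 𝕜 := fun i => (‖e i‖ : 𝕜)⁻¹ • g i
  have hψ : ∀ i, ψ i (e i) = 1 := by
    intro i
    have hne : (‖e i‖ : 𝕜) ≠ 0 := by
      simpa using norm_ne_zero_iff.2 (he i)
    simp only [ψ, ContinuousLinearMap.smul_apply, hg2 i, smul_eq_mul]
    exact inv_mul_cancel₀ hne
  -- the rank-one difference operators
  let φ : ℕ → X →L[𝕜] X := fun i =>
    (((evalCLM (𝕜 := 𝕜) (i+1)).comp G.subtypeL) -
      ((evalCLM (𝕜 := 𝕜) i).comp G.subtypeL)).comp (T.symm : X →L[𝕜] G)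
  have hφval : ∀ (w : X) (i : ℕ),
      φ i w = ((T.symm w : ℕ →ᵇ X)) (i+1) - ((T.symm w : ℕ →ᵇ X)) i := fun w i => rfl
  have hrep : ∀ (w : X) (i : ℕ), (ψ i) (φ i w) • e i = φ i w := by
    intro w i
    obtain ⟨a, ha⟩ := Submodule.mem_span_singleton.1 ((memP (T.symm w)).2.1 i)
    have hφa : φ i w = a • e i := by rw [hφval]; exact ha.symm
    rw [hφa, map_smul, smul_eq_mul, hψ i, mul_one]
  refine ⟨fun i => (ψ i).comp (φ i), fun x => ?_⟩
  have hsum : ∀ N, ∑ i ∈ Finset.range N, ((ψ i).comp (φ i)) x • e i =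
      ((T.symm x : ℕ →ᵇ X)) N := by
    intro N
    have hterm : ∀ i, ((ψ i).comp (φ i)) x • e i =
        ((T.symm x : ℕ →ᵇ X)) (i+1) - ((T.symm x : ℕ →ᵇ X)) i := by
      intro i
      rw [ContinuousLinearMap.comp_apply, hrep x i, hφval]
    rw [Finset.sum_congr rfl (fun i _ => hterm i), Finset.sum_range_sub]
    rw [(memP (T.symm x)).1, sub_zero]
  have hconv : Tendsto (fun n => ((T.symm x : ℕ →ᵇ X)) n) atTop (𝓝 x) := by
    have := hLval (T.symm x)
    rwa [show L (T.symm x) = x from by rw [← hT]; exact T.apply_symm_apply x] at this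
  have hfe : (fun N => ∑ i ∈ Finset.range N, ((ψ i).comp (φ i)) x • e i) =
      fun N => ((T.symm x : ℕ →ᵇ X)) N := funext hsum
  rwa [hfe]

end Aux

/-- If a Banach space `X` admits a Schauder basis `(e_n)` (every `x` has a
unique representation `x = ∑ₙ cₙ eₙ`), then every approximate Bessel sequence `(f, τ)`
for `X` can be expanded to an approximate Schauder frame for `X`. -/
theorem approxBessel_expands_to_ASF_of_schauderBasis
    {𝕜 : Type*} [RCLike 𝕜] {X : Type*} [NormedAddCommGroup X]
    [NormedSpace 𝕜 X] [CompleteSpace X]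
    -- `X` admits a Schauder basis
    (e : ℕ → X)
    (hbasis : ∀ x : X, ∃! c : ℕ → 𝕜,
      Tendsto (fun N => ∑ i ∈ Finset.range N, c i • e i) atTop (𝓝 x))
    -- `(f, τ)` is an approximate Bessel sequence with frame operator `S`
    (f : ℕ → X →L[𝕜] 𝕜) (τ : ℕ → X) (S : X →L[𝕜] X)
    (hBessel : ∀ x : X,
      Tendsto (fun N => ∑ i ∈ Finset.range N, f i x • τ i) atTop (𝓝 (S x))) :
    -- there is an expansion `((f) ∪ (h), (τ) ∪ (ρ))` which is an ASF for `X`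
    ∃ (h : ℕ → X →L[𝕜] 𝕜) (ρ : ℕ → X) (T : X ≃L[𝕜] X), ∀ x : X, ∃ y z : X,
      Tendsto (fun N => ∑ i ∈ Finset.range N, f i x • τ i) atTop (𝓝 y) ∧
      Tendsto (fun N => ∑ i ∈ Finset.range N, h i x • ρ i) atTop (𝓝 z) ∧
      y + z = T x := by
  obtain ⟨h, hh⟩ := schauder_coord_continuous e hbasis
  refine ⟨fun i => (h i).comp (ContinuousLinearMap.id 𝕜 X - S), e,
    ContinuousLinearEquiv.refl 𝕜 X, fun x => ⟨S x, x - S x, hBessel x, ?_, by simp⟩⟩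
  simpa using hh (x - S x)
end

section
/- Let p ∈ [1, ∞) and let (f_n)_{n∈ℕ} in (ℓ^p(ℕ))* and (τ_n)_{n∈ℕ} in ℓ^p(ℕ) form a p-approximate Bessel sequence for ℓ^p(ℕ) with frame operator S_{f,τ}. Let (e_n)_{n∈ℕ} be the standard unit vectors of ℓ^p(ℕ) and (ζ_n)_{n∈ℕ} the coordinate functionals. Define h_n := ζ_n and ρ_n := (I − S_{f,τ})e_n for all n ∈ ℕ. Then the combined pair ((f_n)∪(h_n), (τ_n)∪(ρ_n)) (indexed over ℕ ⊕ ℕ) is a p-approximate Schauder frame for ℓ^p(ℕ): its combined analysis map x ↦ (f_n(x))_n ∪ (h_n(x))_n is a bounded operator into ℓ^p(ℕ ⊕ ℕ), its combined synthesis map is a bounded operator from ℓ^p(ℕ ⊕ ℕ) to ℓ^p(ℕ), and its frame operator is the identity. -/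
open Filter Topology
open scoped ENNReal


namespace PASFaux

variable {𝕜 : Type*} [RCLike 𝕜] {p : ℝ≥0∞} [Fact (1 ≤ p)]

lemma hp0 : p ≠ 0 := (lt_of_lt_of_le zero_lt_one Fact.out).ne'

lemma htpos (hp : p ≠ ∞) : 0 < p.toReal := ENNReal.toReal_pos hp0 hp

lemma memL (hp : p ≠ ∞) (a : lp (fun _ : ℕ ⊕ ℕ => 𝕜) p) :
    Memℓp (fun n : ℕ => a (Sum.inl n)) p := by
  apply memℓp_gen' (C := ‖a‖ ^ p.toReal)
  intro s
  calc ∑ i ∈ s, ‖a (Sum.inl i)‖ ^ p.toReal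
      = ∑ j ∈ s.map ⟨Sum.inl, Sum.inl_injective⟩, ‖a j‖ ^ p.toReal := by
        rw [Finset.sum_map]; rfl
    _ ≤ ‖a‖ ^ p.toReal := lp.sum_rpow_le_norm_rpow (htpos hp) a _

lemma memR (hp : p ≠ ∞) (a : lp (fun _ : ℕ ⊕ ℕ => 𝕜) p) :
    Memℓp (fun n : ℕ => a (Sum.inr n)) p := by
  apply memℓp_gen' (C := ‖a‖ ^ p.toReal)
  intro s
  calc ∑ i ∈ s, ‖a (Sum.inr i)‖ ^ p.toReal
      = ∑ j ∈ s.map ⟨Sum.inr, Sum.inr_injective⟩, ‖a j‖ ^ p.toReal := by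
        rw [Finset.sum_map]; rfl
    _ ≤ ‖a‖ ^ p.toReal := lp.sum_rpow_le_norm_rpow (htpos hp) a _

/-- restriction to left coordinates -/
noncomputable def piL (hp : p ≠ ∞) : lp (fun _ : ℕ ⊕ ℕ => 𝕜) p →L[𝕜] lp (fun _ : ℕ => 𝕜) p :=
  LinearMap.mkContinuous
    { toFun := fun a => ⟨fun n => a (Sum.inl n), memL hp a⟩
      map_add' := fun a b => lp.ext (funext fun n => by
        change (a + b) (Sum.inl n) = _
        rw [lp.coeFn_add]; rfl)
      map_smul' := fun c a => lp.ext (funext fun n => by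
        change (c • a) (Sum.inl n) = _
        rw [lp.coeFn_smul]; rfl) }
    1 (fun a => by
      rw [one_mul]
      apply lp.norm_le_of_forall_sum_le (htpos hp) (norm_nonneg a)
      intro s
      calc ∑ i ∈ s, ‖a (Sum.inl i)‖ ^ p.toReal
          = ∑ j ∈ s.map ⟨Sum.inl, Sum.inl_injective⟩, ‖a j‖ ^ p.toReal := by
            rw [Finset.sum_map]; rfl
        _ ≤ ‖a‖ ^ p.toReal := lp.sum_rpow_le_norm_rpow (htpos hp) a _)

/-- restriction to right coordinates -/
noncomputable def piR (hp : p ≠ ∞) : lp (fun _ : ℕ ⊕ ℕ => 𝕜) p →L[𝕜] lp (fun _ : ℕ => 𝕜) p :=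
  LinearMap.mkContinuous
    { toFun := fun a => ⟨fun n => a (Sum.inr n), memR hp a⟩
      map_add' := fun a b => lp.ext (funext fun n => by
        change (a + b) (Sum.inr n) = _
        rw [lp.coeFn_add]; rfl)
      map_smul' := fun c a => lp.ext (funext fun n => by
        change (c • a) (Sum.inr n) = _
        rw [lp.coeFn_smul]; rfl) }
    1 (fun a => by
      rw [one_mul]
      apply lp.norm_le_of_forall_sum_le (htpos hp) (norm_nonneg a)
      intro s
      calc ∑ i ∈ s, ‖a (Sum.inr i)‖ ^ p.toReal
          = ∑ j ∈ s.map ⟨Sum.inr, Sum.inr_injective⟩, ‖a j‖ ^ p.toReal := by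
            rw [Finset.sum_map]; rfl
        _ ≤ ‖a‖ ^ p.toReal := lp.sum_rpow_le_norm_rpow (htpos hp) a _)

@[simp] lemma piL_apply (hp : p ≠ ∞) (a : lp (fun _ : ℕ ⊕ ℕ => 𝕜) p) (n : ℕ) :
    piL hp a n = a (Sum.inl n) := rfl

@[simp] lemma piR_apply (hp : p ≠ ∞) (a : lp (fun _ : ℕ ⊕ ℕ => 𝕜) p) (n : ℕ) :
    piR hp a n = a (Sum.inr n) := rfl

lemma memElimL (hp : p ≠ ∞) (x : lp (fun _ : ℕ => 𝕜) p) :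
    Memℓp (Sum.elim (⇑x) (0 : ℕ → 𝕜) : ℕ ⊕ ℕ → 𝕜) p := by
  apply memℓp_gen' (C := ‖x‖ ^ p.toReal)
  intro s
  rw [← Finset.toLeft_disjSum_toRight (u := s), Finset.sum_disjSum]
  simp only [Sum.elim_inl, Sum.elim_inr, Pi.zero_apply, norm_zero,
    Real.zero_rpow (htpos hp).ne', Finset.sum_const_zero, add_zero]
  exact lp.sum_rpow_le_norm_rpow (htpos hp) x _

lemma memElimR (hp : p ≠ ∞) (x : lp (fun _ : ℕ => 𝕜) p) :
    Memℓp (Sum.elim (0 : ℕ → 𝕜) (⇑x) : ℕ ⊕ ℕ → 𝕜) p := by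
  apply memℓp_gen' (C := ‖x‖ ^ p.toReal)
  intro s
  rw [← Finset.toLeft_disjSum_toRight (u := s), Finset.sum_disjSum]
  simp only [Sum.elim_inl, Sum.elim_inr, Pi.zero_apply, norm_zero,
    Real.zero_rpow (htpos hp).ne', Finset.sum_const_zero, zero_add]
  exact lp.sum_rpow_le_norm_rpow (htpos hp) x _

/-- embedding into left coordinates -/
noncomputable def iotaL (hp : p ≠ ∞) : lp (fun _ : ℕ => 𝕜) p →L[𝕜] lp (fun _ : ℕ ⊕ ℕ => 𝕜) p :=
  LinearMap.mkContinuous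
    { toFun := fun x => ⟨Sum.elim (⇑x) 0, memElimL hp x⟩
      map_add' := fun x y => lp.ext (funext fun j => by
        rw [lp.coeFn_add (⟨Sum.elim (⇑x) 0, memElimL hp x⟩ : lp (fun _ : ℕ ⊕ ℕ => 𝕜) p)]
        cases j with
        | inl n => change (x + y) n = _; rw [lp.coeFn_add]; rfl
        | inr n => change (0 : 𝕜) = _; simp)
      map_smul' := fun c x => lp.ext (funext fun j => by
        rw [lp.coeFn_smul _ (⟨Sum.elim (⇑x) 0, memElimL hp x⟩ : lp (fun _ : ℕ ⊕ ℕ => 𝕜) p)]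
        cases j with
        | inl n => change (c • x) n = _; rw [lp.coeFn_smul]; rfl
        | inr n => change (0 : 𝕜) = _; simp) }
    1 (fun x => by
      rw [one_mul]
      apply lp.norm_le_of_forall_sum_le (htpos hp) (norm_nonneg x)
      intro s
      rw [← Finset.toLeft_disjSum_toRight (u := s), Finset.sum_disjSum]
      simp only [Real.zero_rpow (htpos hp).ne']
      calc (∑ i ∈ s.toLeft, ‖(⟨Sum.elim (⇑x) 0, memElimL hp x⟩ :
              lp (fun _ : ℕ ⊕ ℕ => 𝕜) p) (Sum.inl i)‖ ^ p.toReal)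
            + ∑ i ∈ s.toRight, ‖(⟨Sum.elim (⇑x) 0, memElimL hp x⟩ :
              lp (fun _ : ℕ ⊕ ℕ => 𝕜) p) (Sum.inr i)‖ ^ p.toReal
          = ∑ i ∈ s.toLeft, ‖x i‖ ^ p.toReal := by
            simp [Real.zero_rpow (htpos hp).ne']
        _ ≤ ‖x‖ ^ p.toReal := lp.sum_rpow_le_norm_rpow (htpos hp) x _)

/-- embedding into right coordinates -/
noncomputable def iotaR (hp : p ≠ ∞) : lp (fun _ : ℕ => 𝕜) p →L[𝕜] lp (fun _ : ℕ ⊕ ℕ => 𝕜) p :=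
  LinearMap.mkContinuous
    { toFun := fun x => ⟨Sum.elim 0 (⇑x), memElimR hp x⟩
      map_add' := fun x y => lp.ext (funext fun j => by
        rw [lp.coeFn_add (⟨Sum.elim 0 (⇑x), memElimR hp x⟩ : lp (fun _ : ℕ ⊕ ℕ => 𝕜) p)]
        cases j with
        | inl n => change (0 : 𝕜) = _; simp
        | inr n => change (x + y) n = _; rw [lp.coeFn_add]; rfl)
      map_smul' := fun c x => lp.ext (funext fun j => by
        rw [lp.coeFn_smul _ (⟨Sum.elim 0 (⇑x), memElimR hp x⟩ : lp (fun _ : ℕ ⊕ ℕ => 𝕜) p)]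
        cases j with
        | inl n => change (0 : 𝕜) = _; simp
        | inr n => change (c • x) n = _; rw [lp.coeFn_smul]; rfl) }
    1 (fun x => by
      rw [one_mul]
      apply lp.norm_le_of_forall_sum_le (htpos hp) (norm_nonneg x)
      intro s
      rw [← Finset.toLeft_disjSum_toRight (u := s), Finset.sum_disjSum]
      calc (∑ i ∈ s.toLeft, ‖(⟨Sum.elim 0 (⇑x), memElimR hp x⟩ :
              lp (fun _ : ℕ ⊕ ℕ => 𝕜) p) (Sum.inl i)‖ ^ p.toReal)
            + ∑ i ∈ s.toRight, ‖(⟨Sum.elim 0 (⇑x), memElimR hp x⟩ :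
              lp (fun _ : ℕ ⊕ ℕ => 𝕜) p) (Sum.inr i)‖ ^ p.toReal
          = ∑ i ∈ s.toRight, ‖x i‖ ^ p.toReal := by
            simp [Real.zero_rpow (htpos hp).ne']
        _ ≤ ‖x‖ ^ p.toReal := lp.sum_rpow_le_norm_rpow (htpos hp) x _)

@[simp] lemma iotaL_apply_inl (hp : p ≠ ∞) (x : lp (fun _ : ℕ => 𝕜) p) (n : ℕ) :
    iotaL hp x (Sum.inl n) = x n := rfl
@[simp] lemma iotaL_apply_inr (hp : p ≠ ∞) (x : lp (fun _ : ℕ => 𝕜) p) (n : ℕ) :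
    iotaL hp x (Sum.inr n) = 0 := rfl
@[simp] lemma iotaR_apply_inl (hp : p ≠ ∞) (x : lp (fun _ : ℕ => 𝕜) p) (n : ℕ) :
    iotaR hp x (Sum.inl n) = 0 := rfl
@[simp] lemma iotaR_apply_inr (hp : p ≠ ∞) (x : lp (fun _ : ℕ => 𝕜) p) (n : ℕ) :
    iotaR hp x (Sum.inr n) = x n := rfl

end PASFaux

/-- Let `p ∈ [1, ∞)` and let `(f, τ)` be a p-approximate Bessel sequence
for `ℓ^p(ℕ)` (analysis map `θf` and synthesis map `θτ` bounded) with frame operator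
`S = θτ ∘ θf`. With `hₙ := ζₙ` (coordinate functionals) and `ρₙ := (I - S) eₙ`
(`e n = lp.single p n 1` the standard unit vectors), the combined pair
`((f) ∪ (h), (τ) ∪ (ρ))`, indexed over `ℕ ⊕ ℕ`, is a p-approximate Schauder frame for
`ℓ^p(ℕ)`: its combined analysis map is a bounded operator into `ℓ^p(ℕ ⊕ ℕ)`, its
combined synthesis map is a bounded operator from `ℓ^p(ℕ ⊕ ℕ)` to `ℓ^p(ℕ)`, and its
frame operator is the identity. -/
theorem pApproxBessel_lp_expands_to_pASF
    {𝕜 : Type*} [RCLike 𝕜] (p : ℝ≥0∞) [Fact (1 ≤ p)] (hp : p ≠ ∞)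
    (f : ℕ → lp (fun _ : ℕ => 𝕜) p →L[𝕜] 𝕜) (τ : ℕ → lp (fun _ : ℕ => 𝕜) p)
    -- `(f, τ)` is a p-approximate Bessel sequence: bounded analysis map `θf` ...
    (θf : lp (fun _ : ℕ => 𝕜) p →L[𝕜] lp (fun _ : ℕ => 𝕜) p)
    (hθf : ∀ (x : lp (fun _ : ℕ => 𝕜) p) (n : ℕ), θf x n = f n x)
    -- ... and bounded synthesis map `θτ`
    (θτ : lp (fun _ : ℕ => 𝕜) p →L[𝕜] lp (fun _ : ℕ => 𝕜) p)
    (hθτ : ∀ a : lp (fun _ : ℕ => 𝕜) p,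
      Tendsto (fun N => ∑ i ∈ Finset.range N, a i • τ i) atTop (𝓝 (θτ a)))
    -- coordinate functionals `ζ`
    (ζ : ℕ → lp (fun _ : ℕ => 𝕜) p →L[𝕜] 𝕜)
    (hζ : ∀ (n : ℕ) (x : lp (fun _ : ℕ => 𝕜) p), ζ n x = x n)
    -- `hₙ := ζₙ` and `ρₙ := (I - S) eₙ` where `S = θτ ∘ θf` is the frame operator
    (h : ℕ → lp (fun _ : ℕ => 𝕜) p →L[𝕜] 𝕜) (ρ : ℕ → lp (fun _ : ℕ => 𝕜) p)
    (hdef : ∀ n, h n = ζ n)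
    (ρdef : ∀ n, ρ n =
      lp.single p n (1 : 𝕜) - θτ (θf (lp.single p n (1 : 𝕜)))) :
    ∃ (Θ : lp (fun _ : ℕ => 𝕜) p →L[𝕜] lp (fun _ : ℕ ⊕ ℕ => 𝕜) p)
      (Γ : lp (fun _ : ℕ ⊕ ℕ => 𝕜) p →L[𝕜] lp (fun _ : ℕ => 𝕜) p),
      -- combined analysis map
      (∀ (x : lp (fun _ : ℕ => 𝕜) p) (n : ℕ), Θ x (Sum.inl n) = f n x) ∧
      (∀ (x : lp (fun _ : ℕ => 𝕜) p) (n : ℕ), Θ x (Sum.inr n) = h n x) ∧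
      -- combined synthesis map
      (∀ a : lp (fun _ : ℕ ⊕ ℕ => 𝕜) p,
        Tendsto (fun N => ∑ i ∈ Finset.range N, a (Sum.inl i) • τ i
            + ∑ i ∈ Finset.range N, a (Sum.inr i) • ρ i)
          atTop (𝓝 (Γ a))) ∧
      -- the frame operator of the combined pair is the identity
      (∀ x : lp (fun _ : ℕ => 𝕜) p, Γ (Θ x) = x) := by
  classical
  set Θ : lp (fun _ : ℕ => 𝕜) p →L[𝕜] lp (fun _ : ℕ ⊕ ℕ => 𝕜) p :=
    (PASFaux.iotaL hp).comp θf + PASFaux.iotaR hp with hΘ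
  set Γ : lp (fun _ : ℕ ⊕ ℕ => 𝕜) p →L[𝕜] lp (fun _ : ℕ => 𝕜) p :=
    θτ.comp (PASFaux.piL hp) +
      (ContinuousLinearMap.id 𝕜 _ - θτ.comp θf).comp (PASFaux.piR hp) with hΓ
  have coordL : ∀ (x : lp (fun _ : ℕ => 𝕜) p) (n : ℕ), Θ x (Sum.inl n) = θf x n := by
    intro x n
    rw [hΘ, ContinuousLinearMap.add_apply]
    have hc := congrFun (lp.coeFn_add ((PASFaux.iotaL hp).comp θf x) (PASFaux.iotaR hp x))
      (Sum.inl n)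
    rw [hc]
    simp [ContinuousLinearMap.comp_apply]
  have coordR : ∀ (x : lp (fun _ : ℕ => 𝕜) p) (n : ℕ), Θ x (Sum.inr n) = x n := by
    intro x n
    rw [hΘ, ContinuousLinearMap.add_apply]
    have hc := congrFun (lp.coeFn_add ((PASFaux.iotaL hp).comp θf x) (PASFaux.iotaR hp x))
      (Sum.inr n)
    rw [hc]
    simp [ContinuousLinearMap.comp_apply]
  refine ⟨Θ, Γ, ?_, ?_, ?_, ?_⟩
  · intro x n
    rw [coordL x n, hθf]
  · intro x n
    rw [coordR x n, hdef, hζ]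
  · intro a
    set aL := PASFaux.piL hp a with haL
    set aR := PASFaux.piR hp a with haR
    have h1 := hθτ aL
    have h2 : Tendsto (fun N => ∑ i ∈ Finset.range N, lp.single p i (aR i)) atTop (𝓝 aR) :=
      (lp.hasSum_single hp aR).tendsto_sum_nat
    have h3 : Tendsto (fun N => (∑ i ∈ Finset.range N, lp.single p i (aR i))
          - θτ (θf (∑ i ∈ Finset.range N, lp.single p i (aR i)))) atTop
        (𝓝 (aR - θτ (θf aR))) :=
      h2.sub (((θτ.comp θf).continuous.tendsto aR).comp h2)
    have h4 := h1.add h3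
    have hΓa : Γ a = θτ aL + (aR - θτ (θf aR)) := by
      rw [hΓ]
      simp [ContinuousLinearMap.add_apply, ContinuousLinearMap.comp_apply,
        ContinuousLinearMap.sub_apply, ← haL, ← haR]
    rw [hΓa]
    refine h4.congr fun N => ?_
    refine congrArg₂ HAdd.hAdd rfl ?_
    have key : ∀ i : ℕ, lp.single p i (aR i) - θτ (θf (lp.single p i (aR i)))
        = a (Sum.inr i) • ρ i := by
      intro i
      have hsingle : lp.single p i (aR i)
          = a (Sum.inr i) • (lp.single p i (1 : 𝕜) : lp (fun _ : ℕ => 𝕜) p) := by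
        rw [← lp.single_smul, smul_eq_mul, mul_one]
        rfl
      rw [ρdef i, smul_sub, ← hsingle, ← map_smul θτ, ← map_smul θf, ← hsingle]
    have e1 : θf (∑ i ∈ Finset.range N, lp.single p i (aR i))
        = ∑ i ∈ Finset.range N, θf (lp.single p i (aR i)) := map_sum θf _ _
    have e2 : θτ (∑ i ∈ Finset.range N, θf (lp.single p i (aR i)))
        = ∑ i ∈ Finset.range N, θτ (θf (lp.single p i (aR i))) := map_sum θτ _ _
    calc (∑ i ∈ Finset.range N, lp.single p i (aR i))
          - θτ (θf (∑ i ∈ Finset.range N, lp.single p i (aR i)))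
        = ∑ i ∈ Finset.range N,
            (lp.single p i (aR i) - θτ (θf (lp.single p i (aR i)))) := by
          rw [e1, e2, Finset.sum_sub_distrib]
      _ = ∑ i ∈ Finset.range N, a (Sum.inr i) • ρ i :=
          Finset.sum_congr rfl fun i _ => key i
  · intro x
    have hL : PASFaux.piL hp (Θ x) = θf x := by
      apply lp.ext
      funext n
      rw [PASFaux.piL_apply, coordL x n]
    have hR : PASFaux.piR hp (Θ x) = x := by
      apply lp.ext
      funext n
      rw [PASFaux.piR_apply, coordR x n]
    rw [hΓ, ContinuousLinearMap.add_apply, ContinuousLinearMap.comp_apply,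
      ContinuousLinearMap.comp_apply, hL, hR, ContinuousLinearMap.sub_apply,
      ContinuousLinearMap.comp_apply, ContinuousLinearMap.id_apply]
    abel
end
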